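/- For 0 < α < 1, f.p.∫_0^∞ x^{α-2}/(1+x²) dx = −(π/2)/cos(πα/2). -/

import Mathlib

open MeasureTheory Real Set Filter Topology

lemma g2_cont (α : ℝ) : ContinuousOn (fun x : ℝ => x ^ α / (1 + x ^ 2)) (Ioi 0) := by
  intro x hx
  have h1 : (0:ℝ) < 1 + x ^ 2 := by positivity
  exact (((Real.continuousAt_rpow_const x α (Or.inl (ne_of_gt hx))).div
    (by fun_prop) h1.ne')).continuousWithinAt

lemma g2_integrable (α : ℝ) (hα0 : 0 < α) (hα1 : α < 1) :
    IntegrableOn (fun x : ℝ => x ^ α / (1 + x ^ 2)) (Ioi 0) := by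
  rw [← Ioc_union_Ioi_eq_Ioi (zero_le_one (α := ℝ))]
  apply IntegrableOn.union
  · have hmaj : IntegrableOn (fun x : ℝ => x ^ α) (Ioc 0 1) := by
      rw [← intervalIntegrable_iff_integrableOn_Ioc_of_le zero_le_one]
      exact intervalIntegral.intervalIntegrable_rpow' (by linarith)
    refine Integrable.mono hmaj (((g2_cont α).mono Ioc_subset_Ioi_self).aestronglyMeasurable measurableSet_Ioc) ?_
    filter_upwards [ae_restrict_mem measurableSet_Ioc] with x hx
    have hx0 : 0 < x := hx.1
    have h1 : (0:ℝ) < 1 + x ^ 2 := by positivity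
    rw [Real.norm_eq_abs, Real.norm_eq_abs, abs_of_nonneg (by positivity),
      abs_of_nonneg (rpow_nonneg hx0.le α)]
    calc x ^ α / (1 + x ^ 2) ≤ x ^ α / 1 := by
          apply div_le_div_of_nonneg_left (rpow_nonneg hx0.le α) one_pos (by nlinarith)
      _ = x ^ α := div_one _
  · have hmaj : IntegrableOn (fun x : ℝ => x ^ (α - 2)) (Ioi 1) :=
      integrableOn_Ioi_rpow_of_lt (by linarith) one_pos
    refine Integrable.mono hmaj (((g2_cont α).mono (Ioi_subset_Ioi zero_le_one)).aestronglyMeasurable measurableSet_Ioi) ?_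
    filter_upwards [ae_restrict_mem measurableSet_Ioi] with x hx
    have hx0 : (0:ℝ) < x := lt_trans one_pos hx
    have h1 : (0:ℝ) < 1 + x ^ 2 := by positivity
    rw [Real.norm_eq_abs, Real.norm_eq_abs, abs_of_nonneg (by positivity),
      abs_of_nonneg (rpow_nonneg hx0.le _)]
    have : x ^ (α - 2) = x ^ α / x ^ 2 := by
      rw [← Real.rpow_natCast x 2, ← Real.rpow_sub hx0]; norm_num
    rw [this]
    apply div_le_div_of_nonneg_left (rpow_nonneg hx0.le α) (by positivity) (by nlinarith)

lemma stepA (α : ℝ) (hα0 : 0 < α) (hα1 : α < 1) {e : ℝ} (he : 0 < e) :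
    (∫ x in Ioi e, x ^ (α - 2) / (1 + x ^ 2)) - e ^ (α - 1) / (1 - α)
      = -∫ x in Ioi e, x ^ α / (1 + x ^ 2) := by
  have h1 : IntegrableOn (fun x : ℝ => x ^ (α - 2)) (Ioi e) :=
    integrableOn_Ioi_rpow_of_lt (by linarith) he
  have h2 : IntegrableOn (fun x : ℝ => x ^ α / (1 + x ^ 2)) (Ioi e) :=
    (g2_integrable α hα0 hα1).mono_set (Ioi_subset_Ioi he.le)
  have key : (∫ x in Ioi e, x ^ (α - 2) / (1 + x ^ 2))
      = ∫ x in Ioi e, (x ^ (α - 2) - x ^ α / (1 + x ^ 2)) := by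
    refine setIntegral_congr_fun measurableSet_Ioi fun x hx => ?_
    have hx0 : (0:ℝ) < x := lt_trans he hx
    have hpow : x ^ α = x ^ (α - 2) * x ^ 2 := by
      rw [← Real.rpow_natCast x 2, ← Real.rpow_add hx0]; norm_num
    have h3 : (0:ℝ) < 1 + x ^ 2 := by positivity
    rw [hpow]; field_simp; ring
  rw [key, integral_sub h1 h2, integral_Ioi_rpow_of_lt (by linarith) he]
  have : -e ^ (α - 2 + 1) / (α - 2 + 1) = e ^ (α - 1) / (1 - α) := by
    rw [show α - 2 + 1 = α - 1 by ring, show 1 - α = -(α - 1) by ring, div_neg, neg_div]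
  rw [this]; ring

lemma stepB (α : ℝ) (hα0 : 0 < α) (hα1 : α < 1) :
    Tendsto (fun e : ℝ => ∫ x in Ioi e, x ^ α / (1 + x ^ 2)) (𝓝[>] 0)
      (𝓝 (∫ x in Ioi 0, x ^ α / (1 + x ^ 2))) := by
  have hsplit : ∀ e : ℝ, 0 < e →
      (∫ x in Ioi e, x ^ α / (1 + x ^ 2))
        = (∫ x in Ioi 0, x ^ α / (1 + x ^ 2)) - ∫ x in Ioc 0 e, x ^ α / (1 + x ^ 2) := by
    intro e he
    have : (Ioc 0 e) ∪ (Ioi e) = Ioi (0:ℝ) := Ioc_union_Ioi_eq_Ioi he.le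
    rw [← this, setIntegral_union (Ioc_disjoint_Ioi le_rfl) measurableSet_Ioi
      ((g2_integrable α hα0 hα1).mono_set (by rw [← this]; exact subset_union_left))
      ((g2_integrable α hα0 hα1).mono_set (by rw [← this]; exact subset_union_right))]
    ring
  have htail : Tendsto (fun e : ℝ => ∫ x in Ioc 0 e, x ^ α / (1 + x ^ 2)) (𝓝[>] 0) (𝓝 0) := by
    apply squeeze_zero_norm' (a := fun e : ℝ => e ^ (α + 1) / (α + 1))
    · filter_upwards [self_mem_nhdsWithin] with e (he : 0 < e)
      have hb : (∫ x in Ioc 0 e, x ^ α) = e ^ (α + 1) / (α + 1) := by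
        rw [← intervalIntegral.integral_of_le he.le,
          integral_rpow (Or.inl (by linarith)), Real.zero_rpow (by linarith), sub_zero]
      calc ‖∫ x in Ioc 0 e, x ^ α / (1 + x ^ 2)‖
          ≤ ∫ x in Ioc 0 e, ‖x ^ α / (1 + x ^ 2)‖ := norm_integral_le_integral_norm _
        _ ≤ ∫ x in Ioc 0 e, x ^ α := by
            apply setIntegral_mono_on
            · exact ((g2_integrable α hα0 hα1).mono_set
                (Ioc_subset_Ioi_self)).norm
            · rw [← intervalIntegrable_iff_integrableOn_Ioc_of_le he.le]
              exact intervalIntegral.intervalIntegrable_rpow' (by linarith)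
            · exact measurableSet_Ioc
            · intro x hx
              have hx0 : (0:ℝ) < x := hx.1
              rw [Real.norm_eq_abs, abs_of_nonneg (by positivity)]
              calc x ^ α / (1 + x ^ 2) ≤ x ^ α / 1 :=
                    div_le_div_of_nonneg_left (Real.rpow_nonneg hx0.le α) one_pos (by nlinarith)
                _ = x ^ α := div_one _
        _ = e ^ (α + 1) / (α + 1) := hb
    · have h0 : ContinuousAt (fun e : ℝ => e ^ (α + 1)) 0 :=
        Real.continuousAt_rpow_const 0 (α + 1) (Or.inr (by linarith))
      have := (h0.tendsto.mono_left (nhdsWithin_le_nhds (s := Ioi (0:ℝ)))).div_const (α + 1)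
      simpa [Real.zero_rpow (show α + 1 ≠ 0 by linarith)] using this
  have := (tendsto_const_nhds (x := ∫ x in Ioi (0:ℝ), x ^ α / (1 + x ^ 2))
      (f := 𝓝[>] (0:ℝ))).sub htail
  rw [sub_zero] at this
  refine this.congr' ?_
  filter_upwards [self_mem_nhdsWithin] with e (he : 0 < e)
  exact (hsplit e he).symm

lemma sub2 (s : ℝ) (hs0 : 0 < s) (hs1 : s < 1) :
    (∫ t in Ioi (0:ℝ), t ^ (s - 1) / (1 + t)) =
      2 * ∫ x in Ioi (0:ℝ), x ^ (2 * s - 1) / (1 + x ^ 2) := by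
  have himg : (fun x : ℝ => x ^ 2) '' Ioi 0 = Ioi 0 := by
    ext y
    constructor
    · rintro ⟨x, hx, rfl⟩; exact pow_pos (show (0:ℝ) < x from hx) 2
    · intro hy
      exact ⟨Real.sqrt y, Real.sqrt_pos.mpr hy, Real.sq_sqrt (le_of_lt hy)⟩
  have hderiv : ∀ x ∈ Ioi (0:ℝ), HasDerivWithinAt (fun x : ℝ => x ^ 2) (2 * x) (Ioi 0) x := by
    intro x _
    simpa using (hasDerivAt_pow 2 x).hasDerivWithinAt
  have hinj : InjOn (fun x : ℝ => x ^ 2) (Ioi 0) := by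
    intro a ha b hb h
    simp only [mem_Ioi] at ha hb
    simp only at h
    nlinarith [sq_nonneg (a - b), sq_nonneg (a + b)]
  have := integral_image_eq_integral_abs_deriv_smul measurableSet_Ioi hderiv hinj
    (fun t => t ^ (s - 1) / (1 + t))
  rw [himg] at this
  rw [this, ← MeasureTheory.integral_const_mul]
  refine setIntegral_congr_fun measurableSet_Ioi fun x hx => ?_
  have hx0 : (0:ℝ) < x := hx
  have h1 : ((x:ℝ) ^ 2) ^ (s - 1) = x ^ (2 * (s - 1)) := by
    rw [← Real.rpow_natCast x 2, ← Real.rpow_mul hx0.le]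
    norm_num
  rw [smul_eq_mul, h1, abs_of_nonneg (by positivity)]
  rw [show (2:ℝ) * s - 1 = 2 * (s - 1) + 1 by ring, Real.rpow_add_one hx0.ne']
  field_simp

lemma sub1 (s : ℝ) (hs0 : 0 < s) (hs1 : s < 1) :
    (∫ x in Ioo (0:ℝ) 1, x ^ (s - 1) * (1 - x) ^ (-s)) =
      ∫ t in Ioi (0:ℝ), t ^ (s - 1) / (1 + t) := by
  have himg : (fun t : ℝ => t / (1 + t)) '' Ioi 0 = Ioo 0 1 := by
    ext y
    constructor
    · rintro ⟨t, ht, rfl⟩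
      simp only [mem_Ioi] at ht
      have h1 : (0:ℝ) < 1 + t := by linarith
      constructor
      · positivity
      · rw [div_lt_one h1]; linarith
    · rintro ⟨hy0, hy1⟩
      have h1 : (0:ℝ) < 1 - y := by linarith
      refine ⟨y / (1 - y), by rw [mem_Ioi]; positivity, ?_⟩
      field_simp
      ring
  have hderiv : ∀ t ∈ Ioi (0:ℝ), HasDerivWithinAt (fun t : ℝ => t / (1 + t))
      (1 / (1 + t) ^ 2) (Ioi 0) t := by
    intro t ht
    have h1 : (1:ℝ) + t ≠ 0 := by simp only [mem_Ioi] at ht; positivity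
    have := (hasDerivAt_id t).div ((hasDerivAt_const t (1:ℝ)).add (hasDerivAt_id t)) h1
    simpa [Pi.div_def, Pi.add_def] using this.hasDerivWithinAt
  have hinj : InjOn (fun t : ℝ => t / (1 + t)) (Ioi 0) := by
    intro a ha b hb h
    simp only [mem_Ioi] at ha hb
    simp only at h
    have h1 : (1:ℝ) + a ≠ 0 := by positivity
    have h2 : (1:ℝ) + b ≠ 0 := by positivity
    field_simp at h
    linarith
  have := integral_image_eq_integral_abs_deriv_smul measurableSet_Ioi hderiv hinj
    (fun x => x ^ (s - 1) * (1 - x) ^ (-s))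
  rw [himg] at this
  rw [this]
  refine setIntegral_congr_fun measurableSet_Ioi fun t ht => ?_
  have ht0 : (0:ℝ) < t := ht
  have h1 : (0:ℝ) < 1 + t := by linarith
  have hsub : 1 - t / (1 + t) = 1 / (1 + t) := by field_simp; ring
  rw [smul_eq_mul, hsub, abs_of_nonneg (by positivity)]
  have e1 : (t / (1 + t)) ^ (s - 1) = t ^ (s - 1) * (1 + t) ^ (1 - s) := by
    rw [Real.div_rpow ht0.le h1.le, div_eq_mul_inv, ← Real.rpow_neg h1.le, neg_sub]
  have e2 : ((1:ℝ) / (1 + t)) ^ (-s) = (1 + t) ^ s := by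
    rw [one_div, ← Real.rpow_neg_one (1 + t), ← Real.rpow_mul h1.le]
    norm_num
  have e3 : (1:ℝ) / (1 + t) ^ 2 = (1 + t) ^ (-(2:ℝ)) := by
    rw [Real.rpow_neg h1.le, one_div, ← Real.rpow_natCast (1+t) 2]
    norm_num
  rw [e1, e2, e3]
  rw [show (1 + t) ^ (-(2:ℝ)) * (t ^ (s - 1) * (1 + t) ^ (1 - s) * (1 + t) ^ s)
      = t ^ (s - 1) * ((1 + t) ^ (-(2:ℝ)) * ((1 + t) ^ (1 - s) * (1 + t) ^ s)) by ring,
    ← Real.rpow_add h1, ← Real.rpow_add h1,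
    show -(2:ℝ) + (1 - s + s) = -1 by ring, Real.rpow_neg_one, div_eq_mul_inv]

lemma betaReal (s : ℝ) (hs0 : 0 < s) (hs1 : s < 1) :
    (∫ x in Ioo (0:ℝ) 1, x ^ (s - 1) * (1 - x) ^ (-s)) = π / Real.sin (π * s) := by
  have hs : 0 < (s : ℂ).re := by simpa using hs0
  have hs' : 0 < ((1 - s : ℝ) : ℂ).re := by simpa using (by linarith : (0:ℝ) < 1 - s)
  have h1 := Complex.Gamma_mul_Gamma_eq_betaIntegral hs hs'
  rw [show (s : ℂ) + ((1 - s : ℝ) : ℂ) = 1 by push_cast; ring, Complex.Gamma_one, one_mul] at h1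
  have h2 : Complex.betaIntegral (s : ℂ) ((1 - s : ℝ) : ℂ)
      = ((∫ x in Ioo (0:ℝ) 1, x ^ (s - 1) * (1 - x) ^ (-s) : ℝ) : ℂ) := by
    rw [Complex.betaIntegral, intervalIntegral.integral_of_le zero_le_one,
      MeasureTheory.integral_Ioc_eq_integral_Ioo]
    rw [show ((∫ x in Ioo (0:ℝ) 1, x ^ (s - 1) * (1 - x) ^ (-s) : ℝ) : ℂ)
        = ∫ x in Ioo (0:ℝ) 1, ((x ^ (s - 1) * (1 - x) ^ (-s) : ℝ) : ℂ) from (integral_ofReal).symm]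
    refine setIntegral_congr_fun measurableSet_Ioo fun x hx => ?_
    obtain ⟨hx0, hx1⟩ := hx
    have e1 : ((x:ℂ)) ^ ((s:ℂ) - 1) = ((x ^ (s - 1) : ℝ) : ℂ) := by
      rw [Complex.ofReal_cpow hx0.le]
      push_cast
      ring_nf
    have e2 : ((1:ℂ) - (x:ℂ)) ^ (((1 - s : ℝ) : ℂ) - 1) = (((1 - x) ^ (-s) : ℝ) : ℂ) := by
      rw [show (1:ℂ) - (x:ℂ) = ((1 - x : ℝ) : ℂ) by push_cast; ring,
        Complex.ofReal_cpow (by linarith)]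
      push_cast
      ring_nf
    rw [e1, e2, ← Complex.ofReal_mul]
  rw [h2, Complex.Gamma_ofReal, Complex.Gamma_ofReal, ← Complex.ofReal_mul,
    Real.Gamma_mul_Gamma_one_sub] at h1
  exact_mod_cast h1.symm

theorem stmt_13 (α : ℝ) (hα0 : 0 < α) (hα1 : α < 1) :
    Tendsto (fun e : ℝ =>
        (∫ x in Ioi e, x ^ (α - 2) / (1 + x ^ 2)) - e ^ (α - 1) / (1 - α))
      (𝓝[>] 0) (𝓝 (-(Real.pi / 2) / Real.cos (Real.pi * α / 2))) := by
  set s : ℝ := (α + 1) / 2 with hs_def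
  have hs0 : 0 < s := by rw [hs_def]; linarith
  have hs1 : s < 1 := by rw [hs_def]; linarith
  have hval : 2 * (∫ x in Ioi (0:ℝ), x ^ α / (1 + x ^ 2)) = π / Real.cos (π * α / 2) := by
    have h := (betaReal s hs0 hs1).symm.trans ((sub1 s hs0 hs1).trans (sub2 s hs0 hs1))
    rw [show 2 * s - 1 = α by rw [hs_def]; ring] at h
    rw [← h]
    congr 1
    rw [show π * s = π / 2 + π * α / 2 by rw [hs_def]; ring, Real.sin_add]
    simp
  have hlim := (stepB α hα0 hα1).neg
  have hI : -(∫ x in Ioi (0:ℝ), x ^ α / (1 + x ^ 2)) = -(π / 2) / Real.cos (π * α / 2) := by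
    have : (∫ x in Ioi (0:ℝ), x ^ α / (1 + x ^ 2)) = π / Real.cos (π * α / 2) / 2 := by
      linarith
    rw [this]; ring
  rw [hI] at hlim
  refine hlim.congr' ?_
  filter_upwards [self_mem_nhdsWithin] with e (he : 0 < e)
  exact (stepA α hα0 hα1 he).symm
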